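/- Let r ≥ 2 and let V_0 ~ Beta(1,α1), V_k ~ Beta(1+α1+···+α_k, α_{k+1}) for k = 1,...,r−1 be independent, with all α_i > 0. Define S_i = V_0·V_1···V_{r−i} for i = 1,...,r. Then S_i ~ Beta(1, α1 + ··· + α_{r−i+1}) for every i. -/

import Mathlib

open MeasureTheory ProbabilityTheory Real Filter intervalIntegral
open scoped ENNReal

/-- The density of a Beta(a,b) random variable on (0,1). -/
noncomputable def _root_.betaPDFReal (a b x : ℝ) : ℝ :=
  if 0 < x ∧ x < 1 then
    (Real.Gamma (a + b) / (Real.Gamma a * Real.Gamma b)) * x ^ (a - 1) * (1 - x) ^ (b - 1)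
  else 0

/-- The Beta(a,b) probability measure on ℝ. -/
noncomputable def _root_.betaMeasure (a b : ℝ) : Measure ℝ :=
  MeasureTheory.volume.withDensity (fun x => ENNReal.ofReal (_root_.betaPDFReal a b x))

/-- `X` is a beta random variable with parameters `(a, b)` on `(Ω, μ)`. -/
def HasBetaLaw {Ω : Type*} [MeasurableSpace Ω] (μ : Measure Ω) (X : Ω → ℝ) (a b : ℝ) : Prop :=
  Measurable X ∧ μ.map X = _root_.betaMeasure a b

lemma real_beta_integrable {s t : ℝ} (hs : 0 < s) (ht : 0 < t) :
    IntervalIntegrable (fun x : ℝ => x ^ (s-1) * (1-x) ^ (t-1)) volume 0 1 := by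
  have hc := Complex.betaIntegral_convergent (u := (s:ℂ)) (v := (t:ℂ)) (by simpa) (by simpa)
  have heq : ∀ x ∈ Set.Ioc (0:ℝ) 1, ((x ^ (s-1) * (1-x) ^ (t-1) : ℝ) : ℂ)
      = (x : ℂ) ^ ((s:ℂ) - 1) * (1 - (x : ℂ)) ^ ((t:ℂ) - 1) := by
    intro x hx
    push_cast
    rw [Complex.ofReal_cpow hx.1.le, Complex.ofReal_cpow (by linarith [hx.2])]
    push_cast; ring
  rw [intervalIntegrable_iff_integrableOn_Ioc_of_le (by norm_num)] at hc ⊢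
  have h2 : IntegrableOn (fun x : ℝ => ((x ^ (s-1) * (1-x) ^ (t-1) : ℝ) : ℂ)) (Set.Ioc 0 1) volume :=
    hc.congr ((ae_restrict_mem measurableSet_Ioc).mono fun x hx => (heq x hx).symm)
  have h3 := h2.norm
  refine ⟨?_, ?_⟩
  · apply Measurable.aestronglyMeasurable
    fun_prop
  · refine h2.hasFiniteIntegral.congr' (.of_forall fun x => ?_)
    simp [Complex.norm_real]

lemma real_betaIntegral {s t : ℝ} (hs : 0 < s) (ht : 0 < t) :
    ∫ x in (0:ℝ)..1, x ^ (s-1) * (1-x) ^ (t-1) = Gamma s * Gamma t / Gamma (s+t) := by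
  have hc := Complex.Gamma_mul_Gamma_eq_betaIntegral (s := (s:ℂ)) (t := (t:ℂ)) (by simpa) (by simpa)
  have heq : Complex.betaIntegral s t = ((∫ x in (0:ℝ)..1, x ^ (s-1) * (1-x) ^ (t-1) : ℝ) : ℂ) := by
    rw [Complex.betaIntegral, ← intervalIntegral.integral_ofReal]
    refine intervalIntegral.integral_congr fun x hx => ?_
    rw [Set.uIcc_of_le (by norm_num)] at hx
    push_cast
    rw [Complex.ofReal_cpow hx.1, Complex.ofReal_cpow (by linarith [hx.2])]
    push_cast; ring
  rw [heq, ← Complex.ofReal_add, Complex.Gamma_ofReal, Complex.Gamma_ofReal, Complex.Gamma_ofReal] at hc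
  have hne : Gamma (s+t) ≠ 0 := (Gamma_pos_of_pos (by linarith)).ne'
  have : Gamma s * Gamma t = Gamma (s+t) * ∫ x in (0:ℝ)..1, x ^ (s-1) * (1-x) ^ (t-1) := by
    exact_mod_cast hc
  field_simp
  linarith [this]

lemma shifted_integrable {s t z : ℝ} (hs : 0 < s) (ht : 0 < t) (hz0 : 0 < z) (hz1 : z < 1) :
    IntervalIntegrable (fun x : ℝ => (x-z) ^ (s-1) * (1-x) ^ (t-1)) volume z 1 := by
  have h1z : (0:ℝ) < 1 - z := by linarith
  have h1 := (real_beta_integrable hs ht).comp_mul_right (c := (1-z)⁻¹)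
  simp only [zero_div, one_div, inv_inv] at h1
  have h2 := h1.comp_sub_right z
  simp only [zero_add, sub_add_cancel] at h2
  have h3 := h2.mul_const ((1-z) ^ (s-1) * (1-z) ^ (t-1))
  refine h3.congr_ae ?_
  refine (ae_restrict_mem measurableSet_uIoc).mono fun x hx => ?_
  rw [Set.uIoc_of_le (by linarith)] at hx
  have hxz : 0 ≤ x - z := by linarith [hx.1]
  have hx1 : 0 ≤ 1 - x := by linarith [hx.2]
  have key : (x - z) * (1-z)⁻¹ = (x-z)/(1-z) := by ring
  have key2 : 1 - (x - z) * (1-z)⁻¹ = (1-x)/(1-z) := by field_simp; ring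
  dsimp only
  rw [key2, key, Real.div_rpow hxz h1z.le, Real.div_rpow hx1 h1z.le]
  field_simp

lemma shifted_betaIntegral {s t z : ℝ} (hs : 0 < s) (ht : 0 < t) (hz0 : 0 < z) (hz1 : z < 1) :
    ∫ x in z..1, (x-z) ^ (s-1) * (1-x) ^ (t-1)
      = (1-z) ^ (s+t-1) * (Gamma s * Gamma t / Gamma (s+t)) := by
  have h1z : (0:ℝ) < 1 - z := by linarith
  have h := intervalIntegral.integral_comp_mul_add
    (a := 0) (b := 1) (c := 1-z) (fun x : ℝ => (x-z) ^ (s-1) * (1-x) ^ (t-1)) h1z.ne' z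
  simp only [mul_zero, zero_add, mul_one, sub_add_cancel] at h
  have heq : ∫ u in (0:ℝ)..1, ((1-z)*u + z - z) ^ (s-1) * (1 - ((1-z)*u + z)) ^ (t-1)
      = ((1-z) ^ (s-1) * (1-z) ^ (t-1)) * ∫ u in (0:ℝ)..1, u ^ (s-1) * (1-u) ^ (t-1) := by
    rw [← intervalIntegral.integral_const_mul]
    refine intervalIntegral.integral_congr fun u hu => ?_
    rw [Set.uIcc_of_le (by norm_num)] at hu
    have h1 : (1-z)*u + z - z = (1-z)*u := by ring
    have h2 : 1 - ((1-z)*u + z) = (1-z)*(1-u) := by ring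
    rw [h1, h2, Real.mul_rpow h1z.le hu.1, Real.mul_rpow h1z.le (by linarith [hu.2])]
    ring
  rw [heq, real_betaIntegral hs ht] at h
  have h' : ∫ x in z..1, (x-z) ^ (s-1) * (1-x) ^ (t-1)
      = (1-z) * (((1-z) ^ (s-1) * (1-z) ^ (t-1)) * (Gamma s * Gamma t / Gamma (s+t))) := by
    rw [smul_eq_mul] at h
    rw [h, ← mul_assoc, mul_inv_cancel₀ h1z.ne', one_mul]
  rw [h']
  have : (1-z) * ((1-z) ^ (s-1) * (1-z) ^ (t-1)) = (1-z) ^ (s+t-1) := by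
    rw [← Real.rpow_add h1z, mul_comm, ← Real.rpow_add_one h1z.ne']
    congr 1
    ring
  rw [← this]; ring

lemma measurable_betaPDF (a b : ℝ) : Measurable (_root_.betaPDFReal a b) := by
  unfold _root_.betaPDFReal
  have : MeasurableSet {x : ℝ | 0 < x ∧ x < 1} := by
    have : {x : ℝ | 0 < x ∧ x < 1} = Set.Ioo 0 1 := rfl
    rw [this]; exact measurableSet_Ioo
  exact Measurable.ite this (by fun_prop) measurable_const

lemma betaPDF_nonneg (a b x : ℝ) (ha : 0 < a) (hb : 0 < b) : 0 ≤ _root_.betaPDFReal a b x := by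
  unfold _root_.betaPDFReal
  split_ifs with h
  · have h1 := Real.Gamma_pos_of_pos ha
    have h2 := Real.Gamma_pos_of_pos hb
    have h3 := Real.Gamma_pos_of_pos (by linarith : (0:ℝ) < a + b)
    have := Real.rpow_nonneg h.1.le (a-1)
    have := Real.rpow_nonneg (by linarith [h.2] : (0:ℝ) ≤ 1 - x) (b-1)
    positivity
  · exact le_refl 0

lemma conv_density {s t : ℝ} (hs : 0 < s) (ht : 0 < t) (z : ℝ) :
    ∫⁻ x, ENNReal.ofReal (_root_.betaPDFReal (1+s) t x) * ENNReal.ofReal |x⁻¹| *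
        ENNReal.ofReal (_root_.betaPDFReal 1 s (z/x))
      = ENNReal.ofReal (_root_.betaPDFReal 1 (s+t) z) := by
  have hΓs := Real.Gamma_pos_of_pos hs
  have hΓt := Real.Gamma_pos_of_pos ht
  have hΓ1s := Real.Gamma_pos_of_pos (by linarith : (0:ℝ) < 1 + s)
  have hΓst := Real.Gamma_pos_of_pos (by linarith : (0:ℝ) < s + t)
  have hΓ1st := Real.Gamma_pos_of_pos (by linarith : (0:ℝ) < 1 + s + t)
  by_cases hz : 0 < z ∧ z < 1
  case neg =>
    -- kernel is identically zero, and so is the target pdf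
    have hpdf : _root_.betaPDFReal 1 (s+t) z = 0 := by rw [_root_.betaPDFReal, if_neg hz]
    rw [hpdf, ENNReal.ofReal_zero]
    rw [← lintegral_zero]
    congr 1; funext x
    by_cases hx : 0 < x ∧ x < 1
    · have h2 : _root_.betaPDFReal 1 s (z/x) = 0 := by
        rw [_root_.betaPDFReal, if_neg]
        rintro ⟨hu0, hu1⟩
        rcases not_and_or.1 hz with h | h
        · push_neg at h
          exact absurd (div_pos_iff.1 hu0) (by rintro (⟨a,b⟩|⟨a,b⟩) <;> nlinarith [hx.1])
        · push_neg at h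
          have : (1:ℝ) ≤ z / x := (one_le_div hx.1).2 (le_trans hx.2.le h)
          linarith
      rw [h2, ENNReal.ofReal_zero, mul_zero]
    · have h1 : _root_.betaPDFReal (1+s) t x = 0 := by rw [_root_.betaPDFReal, if_neg hx]
      rw [h1, ENNReal.ofReal_zero, zero_mul, zero_mul]
  case pos =>
    obtain ⟨hz0, hz1⟩ := hz
    set c : ℝ := Real.Gamma (1+s+t) / (Real.Gamma (1+s) * Real.Gamma t) *
        (Real.Gamma (1+s) / (Real.Gamma 1 * Real.Gamma s)) with hc
    have hc0 : 0 ≤ c := by rw [hc, Real.Gamma_one]; positivity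
    set F : ℝ → ℝ := (Set.Ioo z 1).indicator
        (fun x => c * ((x-z) ^ (s-1) * (1-x) ^ (t-1))) with hF
    have hkey : ∀ x, ENNReal.ofReal (_root_.betaPDFReal (1+s) t x) * ENNReal.ofReal |x⁻¹| *
        ENNReal.ofReal (_root_.betaPDFReal 1 s (z/x)) = ENNReal.ofReal (F x) := by
      intro x
      by_cases hx : x ∈ Set.Ioo z 1
      · obtain ⟨hxz, hx1⟩ := hx
        have hx0 : 0 < x := lt_trans hz0 hxz
        have hzx : z / x ∈ Set.Ioo (0:ℝ) 1 := ⟨div_pos hz0 hx0, (div_lt_one hx0).2 hxz⟩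
        rw [hF, Set.indicator_of_mem (Set.mem_Ioo.2 ⟨hxz, hx1⟩)]
        have e1 : (1:ℝ) + s - 1 = s := by ring
        have e2 : (1:ℝ) - 1 = 0 := by ring
        have e3 : 1 - z/x = (x - z)/x := by field_simp
        have hp1 : _root_.betaPDFReal (1+s) t x
            = Real.Gamma (1+s+t) / (Real.Gamma (1+s) * Real.Gamma t) * x ^ s * (1-x) ^ (t-1) := by
          rw [_root_.betaPDFReal, if_pos ⟨hx0, hx1⟩, e1]
        have hp2 : _root_.betaPDFReal 1 s (z/x)
            = Real.Gamma (1+s) / (Real.Gamma 1 * Real.Gamma s) * ((x-z) ^ (s-1) / x ^ (s-1)) := by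
          rw [_root_.betaPDFReal, if_pos ⟨hzx.1, hzx.2⟩, e2, Real.rpow_zero, mul_one, e3,
            Real.div_rpow (by linarith) hx0.le]
        have hn1 : (0:ℝ) ≤ _root_.betaPDFReal (1+s) t x := betaPDF_nonneg _ _ _ (by linarith) ht
        rw [abs_of_pos (inv_pos.2 hx0)]
        rw [← ENNReal.ofReal_mul hn1, ← ENNReal.ofReal_mul (by positivity)]
        congr 1
        rw [hp1, hp2]
        have e4 : x ^ s * x⁻¹ = x ^ (s-1) := by
          rw [Real.rpow_sub hx0, Real.rpow_one, div_eq_mul_inv]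
        have hxs : (0:ℝ) < x ^ (s-1) := Real.rpow_pos_of_pos hx0 _
        have lhs_eq : Real.Gamma (1+s+t) / (Real.Gamma (1+s) * Real.Gamma t) * x ^ s * (1-x) ^ (t-1) * x⁻¹ *
            (Real.Gamma (1+s) / (Real.Gamma 1 * Real.Gamma s) * ((x-z) ^ (s-1) / x ^ (s-1)))
            = Real.Gamma (1+s+t) / (Real.Gamma (1+s) * Real.Gamma t) * (x ^ s * x⁻¹) * (1-x) ^ (t-1) *
            (Real.Gamma (1+s) / (Real.Gamma 1 * Real.Gamma s) * ((x-z) ^ (s-1) / x ^ (s-1))) := by ring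
        rw [lhs_eq, e4, hc]
        field_simp
      · rw [hF, Set.indicator_of_notMem hx, ENNReal.ofReal_zero]
        by_cases hx' : 0 < x ∧ x < 1
        · have h2 : _root_.betaPDFReal 1 s (z/x) = 0 := by
            rw [_root_.betaPDFReal, if_neg]
            rintro ⟨hu0, hu1⟩
            have hxz : x ≤ z := by
              by_contra hcon
              exact hx ⟨lt_of_not_ge hcon, hx'.2⟩
            have : (1:ℝ) ≤ z / x := (one_le_div hx'.1).2 hxz
            linarith
          rw [h2, ENNReal.ofReal_zero, mul_zero]
        · have h1 : _root_.betaPDFReal (1+s) t x = 0 := by rw [_root_.betaPDFReal, if_neg hx']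
          rw [h1, ENNReal.ofReal_zero, zero_mul, zero_mul]
    simp_rw [hkey]
    have hFint : Integrable F := by
      rw [hF, integrable_indicator_iff measurableSet_Ioo]
      have h1 : IntervalIntegrable (fun x => c * ((x-z) ^ (s-1) * (1-x) ^ (t-1))) volume z 1 :=
        (shifted_integrable hs ht hz0 hz1).const_mul c
      have h2 : IntegrableOn (fun x => c * ((x-z) ^ (s-1) * (1-x) ^ (t-1))) (Set.Ioc z 1) :=
        (intervalIntegrable_iff_integrableOn_Ioc_of_le hz1.le).1 h1
      exact h2.mono_set Set.Ioo_subset_Ioc_self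
    have hF0 : 0 ≤ F := by
      rw [hF]
      apply Set.indicator_nonneg
      intro x hx
      have h1 : (0:ℝ) ≤ x - z := by linarith [hx.1]
      have h2 : (0:ℝ) ≤ 1 - x := by linarith [hx.2]
      have := Real.rpow_nonneg h1 (s-1)
      have := Real.rpow_nonneg h2 (t-1)
      positivity
    rw [← ofReal_integral_eq_lintegral_ofReal hFint (Filter.Eventually.of_forall hF0)]
    congr 1
    rw [hF, MeasureTheory.integral_indicator measurableSet_Ioo, ← integral_Ioc_eq_integral_Ioo,
      ← intervalIntegral.integral_of_le hz1.le, intervalIntegral.integral_const_mul,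
      shifted_betaIntegral hs ht hz0 hz1]
    rw [_root_.betaPDFReal, if_pos ⟨hz0, hz1⟩]
    rw [Real.Gamma_one, hc]
    have e2 : (1:ℝ) - 1 = 0 := by ring
    rw [e2, Real.rpow_zero, mul_one]
    have e3 : 1 + (s + t) = 1 + s + t := by ring
    rw [e3]
    field_simp
    ring
    rw [Real.Gamma_one, mul_one]

lemma betaMeasure_map_mul {s t : ℝ} (hs : 0 < s) (ht : 0 < t)
    [SFinite (_root_.betaMeasure 1 s)] :
    ((_root_.betaMeasure (1+s) t).prod (_root_.betaMeasure 1 s)).map (fun p : ℝ × ℝ => p.1 * p.2)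
      = _root_.betaMeasure 1 (s+t) := by
  set f₁ : ℝ → ℝ≥0∞ := fun x => ENNReal.ofReal (_root_.betaPDFReal (1+s) t x) with hf₁
  set f₂ : ℝ → ℝ≥0∞ := fun x => ENNReal.ofReal (_root_.betaPDFReal 1 s x) with hf₂
  have hm₁ : Measurable f₁ := (measurable_betaPDF _ _).ennreal_ofReal
  have hm₂ : Measurable f₂ := (measurable_betaPDF _ _).ennreal_ofReal
  have hmul : Measurable (fun p : ℝ × ℝ => p.1 * p.2) := measurable_fst.mul measurable_snd
  refine Measure.ext fun A hA => ?_
  rw [Measure.map_apply hmul hA]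
  have hA' : MeasurableSet ((fun p : ℝ × ℝ => p.1 * p.2) ⁻¹' A) := hmul hA
  rw [show _root_.betaMeasure (1+s) t = volume.withDensity f₁ from rfl]
  rw [Measure.prod_apply hA']
  rw [lintegral_withDensity_eq_lintegral_mul _ hm₁ (measurable_measure_prodMk_left hA')]
  have key : ∀ x : ℝ, f₁ x * _root_.betaMeasure 1 s (Prod.mk x ⁻¹' ((fun p : ℝ × ℝ => p.1 * p.2) ⁻¹' A))
      = ∫⁻ z, A.indicator 1 z * (f₁ x * ENNReal.ofReal |x⁻¹| * f₂ (z/x)) := by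
    intro x
    by_cases hx : 0 < x
    case neg =>
      have h0 : f₁ x = 0 := by
        rw [hf₁]
        simp only [_root_.betaPDFReal]
        rw [if_neg (fun h => hx h.1), ENNReal.ofReal_zero]
      rw [h0, zero_mul]
      simp only [zero_mul, mul_zero, lintegral_zero]
    case pos =>
      have hpre : (Prod.mk x ⁻¹' ((fun p : ℝ × ℝ => p.1 * p.2) ⁻¹' A)) = (fun y => x*y) ⁻¹' A := rfl
      have hS' : MeasurableSet ((fun y => x*y) ⁻¹' A) := (measurable_const_mul x) hA
      rw [hpre, show _root_.betaMeasure 1 s = volume.withDensity f₂ from rfl,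
        withDensity_apply _ hS', ← lintegral_indicator hS']
      have hg : Measurable (fun z => A.indicator 1 z * f₂ (z/x)) :=
        ((measurable_one.indicator hA)).mul (hm₂.comp (measurable_id.div_const x))
      have hmapvol := Real.map_volume_mul_left (ne_of_gt hx)
      have h1 : ∀ y : ℝ, ((fun y => x*y) ⁻¹' A).indicator f₂ y
          = A.indicator 1 (x*y) * f₂ ((x*y)/x) := by
        intro y
        by_cases hy : x*y ∈ A
        · rw [Set.indicator_of_mem hy, Set.indicator_of_mem (show y ∈ (fun y => x*y) ⁻¹' A from hy), Pi.one_apply,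
            one_mul, mul_div_cancel_left₀ _ (ne_of_gt hx)]
        · rw [Set.indicator_of_notMem hy, Set.indicator_of_notMem (show y ∉ (fun y => x*y) ⁻¹' A from hy), zero_mul]
      have change : ∫⁻ y, ((fun y => x*y) ⁻¹' A).indicator f₂ y
          = ENNReal.ofReal |x⁻¹| * ∫⁻ z, A.indicator 1 z * f₂ (z/x) := by
        simp_rw [h1]
        rw [← lintegral_map hg (measurable_const_mul x), hmapvol, lintegral_smul_measure, smul_eq_mul]
      rw [change, ← mul_assoc, ← lintegral_const_mul _ hg]
      congr 1; funext z; ring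
  simp only [Pi.mul_apply]
  rw [lintegral_congr key]
  have hunc : AEMeasurable (Function.uncurry fun x z =>
      A.indicator 1 z * (f₁ x * ENNReal.ofReal |x⁻¹| * f₂ (z/x))) (volume.prod volume) := by
    apply Measurable.aemeasurable
    apply Measurable.mul
    · exact (measurable_one.indicator hA).comp measurable_snd
    · exact (((hm₁.comp measurable_fst).mul
        (measurable_fst.inv.abs.ennreal_ofReal)).mul (hm₂.comp (measurable_snd.div measurable_fst)))
  rw [lintegral_lintegral_swap hunc]
  have step3 : ∀ z : ℝ, ∫⁻ x, A.indicator 1 z * (f₁ x * ENNReal.ofReal |x⁻¹| * f₂ (z/x))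
      = A.indicator (fun z => ENNReal.ofReal (_root_.betaPDFReal 1 (s+t) z)) z := by
    intro z
    have hne : A.indicator (1 : ℝ → ℝ≥0∞) z ≠ ⊤ := by
      by_cases hz : z ∈ A
      · simp [hz]
      · simp [hz]
    rw [lintegral_const_mul' _ _ hne, conv_density hs ht z]
    simp only [Set.indicator]
    by_cases hz : z ∈ A
    · rw [if_pos hz, if_pos hz, Pi.one_apply, one_mul]
    · rw [if_neg hz, if_neg hz, zero_mul]
  rw [lintegral_congr step3, lintegral_indicator hA]
  rw [show _root_.betaMeasure 1 (s+t) = volume.withDensity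
    (fun z => ENNReal.ofReal (_root_.betaPDFReal 1 (s+t) z)) from rfl, withDensity_apply _ hA]

lemma hasBetaLaw_mul {Ω : Type*} [MeasurableSpace Ω] (μ : Measure Ω) [IsProbabilityMeasure μ]
    {X Y : Ω → ℝ} {s t : ℝ} (hs : 0 < s) (ht : 0 < t)
    (hX : HasBetaLaw μ X (1+s) t) (hY : HasBetaLaw μ Y 1 s)
    (hind : IndepFun X Y μ) : HasBetaLaw μ (fun ω => Y ω * X ω) 1 (s+t) := by
  refine ⟨hY.1.mul hX.1, ?_⟩
  have h1 : IsProbabilityMeasure (μ.map Y) := Measure.isProbabilityMeasure_map hY.1.aemeasurable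
  haveI hP : IsProbabilityMeasure (_root_.betaMeasure 1 s) := hY.2 ▸ h1
  have hpair : μ.map (fun ω => (X ω, Y ω)) = (μ.map X).prod (μ.map Y) :=
    (indepFun_iff_map_prod_eq_prod_map_map hX.1.aemeasurable hY.1.aemeasurable).1 hind
  have hmm : μ.map (fun ω => Y ω * X ω) = ((μ.map X).prod (μ.map Y)).map (fun p : ℝ × ℝ => p.1*p.2) := by
    rw [← hpair, Measure.map_map (g := fun p : ℝ × ℝ => p.1 * p.2) (measurable_fst.mul measurable_snd) (hX.1.prodMk hY.1)]
    congr 1; funext ω; simp [mul_comm]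
  rw [hmm, hX.2, hY.2, betaMeasure_map_mul hs ht]

theorem H2_multivariate_marginals {Ω : Type*} [MeasurableSpace Ω] (μ : Measure Ω)
    [IsProbabilityMeasure μ] (r : ℕ) (hr : 2 ≤ r) (α : ℕ → ℝ)
    (hα : ∀ i, 1 ≤ i → i ≤ r → 0 < α i) (V : ℕ → Ω → ℝ)
    (h0 : HasBetaLaw μ (V 0) 1 (α 1))
    (hk : ∀ k, 1 ≤ k → k ≤ r - 1 →
      HasBetaLaw μ (V k) (1 + ∑ j ∈ Finset.Icc 1 k, α j) (α (k + 1)))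
    (hind : iIndepFun (fun k : Fin r => V k) μ) :
    ∀ i, 1 ≤ i → i ≤ r →
      HasBetaLaw μ (fun ω => ∏ k ∈ Finset.range (r - i + 1), V k ω) 1
        (∑ j ∈ Finset.Icc 1 (r - i + 1), α j) := by
  have hmeas : ∀ k : Fin r, Measurable (V k) := by
    intro k
    rcases Nat.eq_zero_or_pos k.val with h | h
    · rw [h]; exact h0.1
    · exact (hk k.val h (by omega)).1
  have hindm : ∀ m : ℕ, m < r → IndepFun (fun ω => ∏ k ∈ Finset.range m, V k ω) (V m) μ := by
    intro m hm
    have hsub : ∀ x ∈ Finset.range m, x < r := fun x hx => lt_trans (Finset.mem_range.1 hx) hm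
    set S : Finset (Fin r) := (Finset.range m).attachFin hsub with hS
    have hnotmem : (⟨m, hm⟩ : Fin r) ∉ S := by
      rw [hS, Finset.mem_attachFin]
      simp
    have hInd := hind.indepFun_finset_prod_of_notMem hmeas hnotmem
    have hprodeq : (∏ j ∈ S, V ↑j) = (fun ω => ∏ k ∈ Finset.range m, V k ω) := by
      funext ω
      rw [Finset.prod_apply]
      apply Finset.prod_bij (fun (a : Fin r) _ => a.val)
      · intro a ha; rw [hS, Finset.mem_attachFin] at ha; exact ha
      · intro a ha b hb hab; exact Fin.val_injective hab
      · intro b hb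
        exact ⟨⟨b, hsub b hb⟩, by rw [hS, Finset.mem_attachFin]; exact hb, rfl⟩
      · intro a ha; rfl
    rwa [hprodeq] at hInd
  have main : ∀ m : ℕ, 1 ≤ m → m ≤ r → HasBetaLaw μ (fun ω => ∏ k ∈ Finset.range m, V k ω) 1
      (∑ j ∈ Finset.Icc 1 m, α j) := by
    intro m
    induction m with
    | zero => omega
    | succ n ih =>
      intro _ hmr
      rcases Nat.eq_zero_or_pos n with hn | hn1
      · subst hn
        simpa using h0
      · have ihn := ih hn1 (by omega)
        have hs : 0 < ∑ j ∈ Finset.Icc 1 n, α j := by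
          apply Finset.sum_pos
          · intro j hj
            exact hα j (Finset.mem_Icc.1 hj).1 (le_trans (Finset.mem_Icc.1 hj).2 (by omega))
          · exact ⟨1, Finset.mem_Icc.2 ⟨le_refl 1, hn1⟩⟩
        have ht : 0 < α (n+1) := hα (n+1) (by omega) (by omega)
        have hVn := hk n hn1 (by omega)
        have hindn := hindm n (by omega)
        have hres := hasBetaLaw_mul μ hs ht hVn ihn hindn.symm
        have hprod : (fun ω => ∏ k ∈ Finset.range (n+1), V k ω)
            = fun ω => (∏ k ∈ Finset.range n, V k ω) * V n ω :=
          funext fun ω => Finset.prod_range_succ _ n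
        have hsum : ∑ j ∈ Finset.Icc 1 (n+1), α j = (∑ j ∈ Finset.Icc 1 n, α j) + α (n+1) :=
          Finset.sum_Icc_succ_top (by omega) α
        rw [hprod, hsum]
        exact hres
  intro i hi1 hir
  exact main (r - i + 1) (by omega) (by omega)
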